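/- The univariate polynomial Q(U) = P(U, 0), where P(U,V) = U²(3293385188722144 - 451048860827136√3 - 952832984463360π - 874782993324240√3π + 463182700780800π² - 4817666363010084U + 916192998555120√3U + 710514087323040√3πU - 330844786272000π²U - 1072431834636645U² + 346350633108480√3πU² - 33084478627200π²U²) + 9V²(...), has a double root at U = 0 and has no root in the open interval (0, 1); moreover Q(1) < 0. -/

import Mathlib

set_option maxHeartbeats 1000000


open Real

private lemma sqrt3_lb : (1.7320508:ℝ) < Real.sqrt 3 := by
  nlinarith [Real.sqrt_nonneg 3, Real.sq_sqrt (show (0:ℝ) ≤ 3 by norm_num)]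

private lemma sqrt3_ub : Real.sqrt 3 < 1.7320509 := by
  nlinarith [Real.sqrt_nonneg 3, Real.sq_sqrt (show (0:ℝ) ≤ 3 by norm_num)]

private lemma cubic_neg : ∀ U : ℝ, 0 < U → U ≤ 1 →
    (3293385188722144 - 451048860827136*Real.sqrt 3 - 952832984463360*π
        - 874782993324240*Real.sqrt 3*π + 463182700780800*π^2
        - 4817666363010084*U + 916192998555120*Real.sqrt 3*U
        + 710514087323040*Real.sqrt 3*π*U - 330844786272000*π^2*U
        - 1072431834636645*U^2 + 346350633108480*Real.sqrt 3*π*U^2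
        - 33084478627200*π^2*U^2) < 0 := by
  intro U hU0 hU1
  set s := Real.sqrt 3 with hs
  have hs1 : (1.7320508:ℝ) < s := sqrt3_lb
  have hs2 : s < 1.7320509 := sqrt3_ub
  have hp1 : (3.141592:ℝ) < π := Real.pi_gt_d6
  have hp2 : π < 3.141593 := Real.pi_lt_d6
  -- coefficients: a0 < 0, a1 + a2 < 0, a2 > 0, and U^2 ≤ U
  have ha0 : 3293385188722144 - 451048860827136*s - 952832984463360*π
      - 874782993324240*s*π + 463182700780800*π^2 < 0 := by
    nlinarith [mul_pos (sub_pos.2 hs1) (sub_pos.2 hp1), sq_nonneg (π - 3.141592)]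
  have ha2 : (0:ℝ) < -1072431834636645 + 346350633108480*s*π - 33084478627200*π^2 := by
    nlinarith [mul_pos (sub_pos.2 hs1) (sub_pos.2 hp1), sq_nonneg (π - 3.141593)]
  have ha12 : -4817666363010084 + 916192998555120*s + 710514087323040*s*π
      - 330844786272000*π^2 + (-1072431834636645 + 346350633108480*s*π
      - 33084478627200*π^2) < 0 := by
    nlinarith [mul_pos (sub_pos.2 hs1) (sub_pos.2 hp1),
      mul_lt_mul_of_pos_left hp2 (show (0:ℝ) < s from by linarith),
      sq_nonneg (π - 3.141592)]
  have hU2 : U^2 ≤ U := by nlinarith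
  nlinarith [mul_le_mul_of_nonneg_left hU2 (le_of_lt ha2),
    mul_pos ha2 hU0, mul_lt_mul_of_pos_right ha12 hU0]

theorem sec4_diagonal_restriction :
    let Q : ℝ → ℝ := fun U =>
      U^2*(3293385188722144 - 451048860827136*Real.sqrt 3 - 952832984463360*π
        - 874782993324240*Real.sqrt 3*π + 463182700780800*π^2
        - 4817666363010084*U + 916192998555120*Real.sqrt 3*U
        + 710514087323040*Real.sqrt 3*π*U - 330844786272000*π^2*U
        - 1072431834636645*U^2 + 346350633108480*Real.sqrt 3*π*U^2
        - 33084478627200*π^2*U^2)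
    Q 0 = 0 ∧ deriv Q 0 = 0 ∧ (∀ U ∈ Set.Ioo (0:ℝ) 1, Q U ≠ 0) ∧ Q 1 < 0 := by
  intro Q
  refine ⟨by simp [Q], ?_, ?_, ?_⟩
  · have hg : DifferentiableAt ℝ (fun U : ℝ =>
        3293385188722144 - 451048860827136*Real.sqrt 3 - 952832984463360*π
        - 874782993324240*Real.sqrt 3*π + 463182700780800*π^2
        - 4817666363010084*U + 916192998555120*Real.sqrt 3*U
        + 710514087323040*Real.sqrt 3*π*U - 330844786272000*π^2*U
        - 1072431834636645*U^2 + 346350633108480*Real.sqrt 3*π*U^2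
        - 33084478627200*π^2*U^2) 0 := by fun_prop
    show deriv (fun U : ℝ => U^2*(3293385188722144 - 451048860827136*Real.sqrt 3 - 952832984463360*π
        - 874782993324240*Real.sqrt 3*π + 463182700780800*π^2
        - 4817666363010084*U + 916192998555120*Real.sqrt 3*U
        + 710514087323040*Real.sqrt 3*π*U - 330844786272000*π^2*U
        - 1072431834636645*U^2 + 346350633108480*Real.sqrt 3*π*U^2
        - 33084478627200*π^2*U^2)) 0 = 0
    rw [deriv_fun_mul (differentiableAt_pow 2) hg, deriv_pow_field]
    simp only [pow_one, mul_zero, zero_mul, ne_eq, OfNat.ofNat_ne_zero,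
      not_false_eq_true, zero_pow, add_zero]
    norm_num
  · intro U hU
    have h := cubic_neg U hU.1 (le_of_lt hU.2)
    have hU2 : (0:ℝ) < U^2 := pow_pos hU.1 2
    exact ne_of_lt (mul_neg_of_pos_of_neg hU2 h)
  · have h := cubic_neg 1 one_pos le_rfl
    exact mul_neg_of_pos_of_neg (by norm_num : (0:ℝ) < 1^2) h
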